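/- Let Ψ(n) = 2^{n^γ} with γ ≥ 1. Then for every β ∈ (0, ∞), the set E_Ψ(β) = {x ∈ (0,1] : lim_{n→∞} S_n(x)/Ψ(n) = β} is empty. -/

import Mathlib

open Filter Set MeasureTheory
open scoped ENNReal Classical

noncomputable def T (x : ℝ) : ℝ := 2 * x - ⌈2 * x⌉ + 1
noncomputable def phi (x : ℝ) : ℝ := 2 ^ ⌊Real.logb 2 x⁻¹⌋

lemma phi_pos (y : ℝ) : 0 < phi y := zpow_pos (by norm_num) _

lemma T_pos (y : ℝ) : 0 < T y := by
  have h := Int.ceil_lt_add_one (2 * y)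
  unfold T; linarith

lemma T_le_one (y : ℝ) : T y ≤ 1 := by
  have h := Int.le_ceil (2 * y)
  unfold T; linarith

lemma phi_halve (y : ℝ) (hy : 0 < y) (h2 : 2 ≤ phi y) : phi (T y) = phi y / 2 := by
  set L := Real.logb 2 y⁻¹ with hL
  have hfl : 1 ≤ ⌊L⌋ := by
    by_contra h
    push_neg at h
    have h0 : ⌊L⌋ ≤ 0 := by omega
    have : phi y ≤ 2 ^ (0:ℤ) := by
      unfold phi
      exact zpow_le_zpow_right₀ (by norm_num) h0
    simp at this; linarith
  have hL1 : (1:ℝ) ≤ L := le_trans (by exact_mod_cast hfl) (Int.floor_le _)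
  have hyinv : (2:ℝ) ≤ y⁻¹ := by
    have := Real.rpow_le_rpow_of_exponent_le (by norm_num : (1:ℝ) ≤ 2) hL1
    rwa [Real.rpow_one, Real.rpow_logb (by norm_num) (by norm_num) (inv_pos.2 hy)] at this
  have hyle : y ≤ 1/2 := by
    have := mul_le_mul_of_nonneg_right hyinv hy.le
    rw [inv_mul_cancel₀ hy.ne'] at this; linarith
  have hceil : ⌈2 * y⌉ = 1 := by
    rw [Int.ceil_eq_iff]
    constructor <;> push_cast <;> linarith
  have hTy : T y = 2 * y := by unfold T; rw [hceil]; push_cast; ring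
  have hlog : Real.logb 2 (2*y)⁻¹ = L - 1 := by
    rw [mul_inv, Real.logb_mul (by norm_num) (inv_ne_zero hy.ne'), Real.logb_inv,
      Real.logb_self_eq_one (by norm_num : (1:ℝ) < 2)]
    ring
  unfold phi
  rw [hTy, hlog, ← hL]
  rw [show L - 1 = L - (1:ℤ) by push_cast; ring, Int.floor_sub_intCast, zpow_sub₀ (by norm_num : (2:ℝ) ≠ 0)]
  norm_num

noncomputable def S (n : ℕ) (x : ℝ) : ℝ := ∑ j ∈ Finset.range n, phi (T^[j] x)
noncomputable def eps (n : ℕ) (x : ℝ) : ℤ := ⌈2 * T^[n-1] x⌉ - 1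

lemma psi_step (γ : ℝ) (hγ : 1 ≤ γ) (n : ℕ) :
    2 * (2:ℝ) ^ ((n:ℝ) ^ γ) ≤ (2:ℝ) ^ (((n+1:ℕ):ℝ) ^ γ) := by
  have hsa : (n:ℝ)^γ + 1 ≤ ((n:ℝ)+1)^γ := by
    have h := NNReal.rpow_add_rpow_le_add (n:NNReal) 1 hγ
    rw [one_div, NNReal.rpow_inv_le_iff (lt_of_lt_of_le one_pos hγ)] at h
    have h2 := NNReal.coe_le_coe.2 h
    push_cast [NNReal.coe_rpow] at h2
    simpa using h2
  calc 2 * (2:ℝ) ^ ((n:ℝ) ^ γ) = (2:ℝ) ^ ((n:ℝ)^γ + 1) := by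
        rw [Real.rpow_add (by norm_num), Real.rpow_one]; ring
    _ ≤ (2:ℝ) ^ (((n:ℝ)+1) ^ γ) := Real.rpow_le_rpow_of_exponent_le (by norm_num) hsa
    _ = (2:ℝ) ^ (((n+1:ℕ):ℝ) ^ γ) := by push_cast; ring_nf

theorem saint_petersburg_stmt11 (γ : ℝ) (hγ : 1 ≤ γ) (β : ℝ) (hβ : 0 < β) :
    {x : ℝ | x ∈ Set.Ioc (0 : ℝ) 1 ∧
      Filter.Tendsto (fun n : ℕ => S n x / (2 : ℝ) ^ ((n : ℝ) ^ γ))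
        Filter.atTop (nhds β)} = ∅ := by
  ext x
  simp only [Set.mem_setOf_eq, Set.mem_empty_iff_false, iff_false, not_and]
  rintro hx hlim
  set Ψ : ℕ → ℝ := fun n => (2:ℝ) ^ ((n:ℝ) ^ γ) with hΨ
  have hΨpos : ∀ n, 0 < Ψ n := fun n => Real.rpow_pos_of_pos (by norm_num) _
  have hΨstep : ∀ n, 2 * Ψ n ≤ Ψ (n+1) := fun n => psi_step γ hγ n
  have hΨgrow : ∀ m j : ℕ, (2:ℝ)^j * Ψ m ≤ Ψ (m + j) := by
    intro m j
    induction j with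
    | zero => simp
    | succ j ih =>
      calc (2:ℝ)^(j+1) * Ψ m = 2 * ((2:ℝ)^j * Ψ m) := by ring
        _ ≤ 2 * Ψ (m + j) := by nlinarith [hΨpos (m+j)]
        _ ≤ Ψ (m + j + 1) := hΨstep _
        _ = Ψ (m + (j+1)) := by ring_nf
  have hpos : ∀ n, 0 < T^[n] x := by
    intro n
    cases n with
    | zero => exact hx.1
    | succ n => rw [Function.iterate_succ_apply']; exact T_pos _
  -- eventual lower bound on phi
  obtain ⟨N₀, hN₀⟩ := Metric.tendsto_atTop.mp hlim (β/8) (by positivity)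
  have key : ∀ n ≥ N₀, β/4 * Ψ (n+1) ≤ phi (T^[n] x) := by
    intro n hn
    have h1 := hN₀ n hn
    have h2 := hN₀ (n+1) (by omega)
    rw [Real.dist_eq, abs_lt] at h1 h2
    have hp1 : S n x / Ψ n < β + β/8 := by have := h1.2; simp only [hΨ] at *; linarith
    have hp2 : β - β/8 < S (n+1) x / Ψ (n+1) := by have := h2.1; simp only [hΨ] at *; linarith
    have hSn : S n x < (β + β/8) * Ψ n := by
      rw [div_lt_iff₀ (hΨpos n)] at hp1; exact hp1
    have hSn1 : (β - β/8) * Ψ (n+1) < S (n+1) x := by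
      rw [lt_div_iff₀ (hΨpos (n+1))] at hp2; exact hp2
    have hdiff : S (n+1) x - S n x = phi (T^[n] x) := by
      simp [S, Finset.sum_range_succ]
    have hstep := hΨstep n
    nlinarith [hΨpos n, hΨpos (n+1)]
  -- choose a large starting index
  obtain ⟨K, hK⟩ := pow_unbounded_of_one_lt (8/β) (by norm_num : (1:ℝ) < 2)
  set M := max K N₀ with hM
  have hMK : (2:ℝ)^K ≤ 2^M := pow_le_pow_right₀ (by norm_num) (le_max_left _ _)
  have hbig : (2:ℝ) ≤ β/4 * Ψ (M+1) := by
    have h1 : (2:ℝ)^M * Ψ 1 ≤ Ψ (1 + M) := hΨgrow 1 M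
    have h2 : Ψ 1 = 2 := by
      simp only [hΨ]; norm_num
    have h3 : 8/β < 2^M := lt_of_lt_of_le hK hMK
    have h4 : (8:ℝ) < β * 2^M := by
      rw [div_lt_iff₀ hβ] at h3; linarith [h3]
    have : (1:ℝ) + M = M + 1 := by ring
    rw [h2] at h1
    have h5 : Ψ (M+1) = Ψ (1+M) := by rw [Nat.add_comm]
    nlinarith [hΨpos (M+1)]
  -- halving chain
  have chain : ∀ j : ℕ, phi (T^[M+j] x) = phi (T^[M] x) / 2^j := by
    intro j
    induction j with
    | zero => simp
    | succ j ih =>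
      have hge : β/4 * Ψ (M+j+1) ≤ phi (T^[M+j] x) := key (M+j) (le_trans (le_max_right _ _) (Nat.le_add_right _ _))
      have hgrow : (2:ℝ)^j * Ψ (M+1) ≤ Ψ (M+1+j) := hΨgrow (M+1) j
      have hj1 : (1:ℝ) ≤ 2^j := one_le_pow₀ (by norm_num)
      have h2le : (2:ℝ) ≤ phi (T^[M+j] x) := by
        have e : M+1+j = M+j+1 := by omega
        rw [e] at hgrow
        nlinarith [hΨpos (M+1)]
      have := phi_halve _ (hpos (M+j)) h2le
      rw [show M + (j+1) = (M+j) + 1 by omega, Function.iterate_succ_apply', this, ih]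
      ring
  -- contradiction
  obtain ⟨j, hj⟩ := pow_unbounded_of_one_lt (phi (T^[M] x)) (by norm_num : (1:ℝ) < 2)
  have hge : β/4 * Ψ (M+j+1) ≤ phi (T^[M+j] x) := key (M+j) (le_trans (le_max_right _ _) (Nat.le_add_right _ _))
  have hgrow : (2:ℝ)^j * Ψ (M+1) ≤ Ψ (M+1+j) := hΨgrow (M+1) j
  have e : M+1+j = M+j+1 := by omega
  rw [e] at hgrow
  rw [chain j] at hge
  have hj1 : (1:ℝ) ≤ 2^j := one_le_pow₀ (by norm_num)
  -- phi(T^M x)/2^j ≥ 2^j * 2, so phi ≥ 2 * 4^j ≥ 2^j > phi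
  have h1 : (2:ℝ)^j * 2 ≤ phi (T^[M] x) / 2^j := by nlinarith [hΨpos (M+1)]
  have h2 : phi (T^[M] x) / 2^j ≤ phi (T^[M] x) := by
    rw [div_le_iff₀ (by positivity)]
    nlinarith [phi_pos (T^[M] x)]
  nlinarith
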